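/- Consider partial functions with the pointwise refinement order. Let l : α →. β and r : γ →. δ be total partial functions such that l is oplaxly weakly orthogonal to r. Then for all total u : α →. γ and total v : β →. δ with v.comp l = r.comp u, there exists a total d : β →. γ with d.comp l = u and r.comp d = v. (Oplax weak orthogonality restricts to strict weak orthogonality on total maps.) -/

import Mathlib

universe u

/-- `f ≤ g` pointwise: every value of `f a` is a value of `g a`. -/
def PFunLE {α β : Type u} (f g : α →. β) : Prop := ∀ a, f a ≤ g a

/-- `f` is total: defined everywhere. -/
def PFun.Total {α β : Type u} (f : α →. β) : Prop := ∀ a, (f a).Dom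

/-- `f` is injective on its domain. -/
def PFun.InjOnDom {α β : Type u} (f : α →. β) : Prop :=
  ∀ ⦃a a' : α⦄ ⦃b : β⦄, b ∈ f a → b ∈ f a' → a = a'

/-- `f` is oplaxly weakly orthogonal to `g`: every oplax square `(u, v) : f → g`
(`v.comp f ≤ g.comp u`) admits an oplax diagonal. -/
def PFun.OplaxOrthP {α β γ δ : Type u} (f : α →. β) (g : γ →. δ) : Prop :=
  ∀ (u : α →. γ) (v : β →. δ), PFunLE (v.comp f) (g.comp u) →
    ∃ d : β →. γ, PFunLE (d.comp f) u ∧ PFunLE v (g.comp d)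

theorem PFunLE.eq_of_total {α β : Type u} {f g : α →. β}
    (h : PFunLE f g) (hf : PFun.Total f) : f = g := by
  funext a
  obtain ⟨b, hb⟩ := Part.dom_iff_mem.mp (hf a)
  have hb' := h a b hb
  rw [Part.eq_some_iff.mpr hb, Part.eq_some_iff.mpr hb']

/-- Oplax weak orthogonality restricts to strict weak orthogonality on total maps. -/
theorem stmt18 {α β γ δ : Type u} (l : α →. β) (r : γ →. δ)
    (hl : PFun.Total l) (hr : PFun.Total r) (horth : PFun.OplaxOrthP l r)
    (u : α →. γ) (v : β →. δ) (hu : PFun.Total u) (hv : PFun.Total v)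
    (hsq : v.comp l = r.comp u) :
    ∃ d : β →. γ, PFun.Total d ∧ d.comp l = u ∧ r.comp d = v := by
  obtain ⟨d, hd1, hd2⟩ := horth u v (fun a => hsq ▸ le_refl _)
  have hdtot : PFun.Total d := by
    intro b
    obtain ⟨c, hc⟩ := Part.dom_iff_mem.mp (hv b)
    have := hd2 b c hc
    rw [PFun.comp_apply] at this; replace this := Part.mem_bind_iff.mp this
    obtain ⟨e, he, _⟩ := this
    exact Part.dom_iff_mem.mpr ⟨e, he⟩
  refine ⟨d, hdtot, ?_, ?_⟩
  · exact hd1.eq_of_total (fun a => by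
      obtain ⟨b, hb⟩ := Part.dom_iff_mem.mp (hl a)
      obtain ⟨c, hc⟩ := Part.dom_iff_mem.mp (hdtot b)
      exact Part.dom_iff_mem.mpr ⟨c, by
        rw [PFun.comp_apply]; exact Part.mem_bind_iff.mpr ⟨b, hb, hc⟩⟩)
  · exact (hd2.eq_of_total hv).symm
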